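/- arXiv:math/0209050 — 3 statements merged into one kernel-verified Lean document; each statement's English description precedes it below -/
import Mathlib

section
/- For every integer j ≥ 1 and every t ≥ 0, p_j(t) = e^{−t}·∫_0^t ((−1)^{j−1}·p_{j−1}(−s) − e^{s}·p_{j−1}(s))/s ds, where p_{j−1} is evaluated at negative arguments via its everywhere-convergent power series and the integrand extends continuously to s = 0. In particular p_1(t) = e^{−t}·∫_0^t (e^{s} − 1)/s ds. -/
open MeasureTheory ProbabilityTheory Real

open MeasureTheory ProbabilityTheory Real

/-- Signless Stirling numbers of the first kind: coefficient of `x^j` in `x(x+1)⋯(x+k-1)`. -/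
noncomputable def stirling1 (k j : ℕ) : ℝ :=
  (∏ i ∈ Finset.range k, (Polynomial.X + Polynomial.C (i : ℝ))).coeff j

/-- Stirling numbers of the second kind. -/
def stirling2 : ℕ → ℕ → ℕ
  | 0, 0 => 1
  | 0, _ + 1 => 0
  | _ + 1, 0 => 0
  | n + 1, k + 1 => (k + 1) * stirling2 n (k + 1) + stirling2 n k

/-- `p_j(t) = e^{-t} Σ_{k≥j} (t^k/k!) σ₁(k,j)/k!` (terms with `k<j` vanish). -/
noncomputable def pfn (j : ℕ) (t : ℝ) : ℝ :=
  Real.exp (-t) * ∑' k : ℕ, t ^ k / (Nat.factorial k : ℝ) * (stirling1 k j / (Nat.factorial k : ℝ))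

/-- `q_j(t) = e^{-t} Σ_{k≥0} (t^k/(k+1)!) Σ_{i=0}^k σ₁(i,j)/i!`. -/
noncomputable def qfn (j : ℕ) (t : ℝ) : ℝ :=
  Real.exp (-t) * ∑' k : ℕ, t ^ k / (Nat.factorial (k + 1) : ℝ) *
    ∑ i ∈ Finset.range (k + 1), stirling1 i j / (Nat.factorial i : ℝ)

/-- `I(t,s) = ∫_s^t e^{-ξ}/ξ dξ`. -/
noncomputable def Ifun (t s : ℝ) : ℝ := ∫ ξ in s..t, Real.exp (-ξ) / ξ

/-- `I(s) = ∫_s^∞ e^{-ξ}/ξ dξ`. -/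
noncomputable def Iinf (s : ℝ) : ℝ := ∫ ξ in Set.Ioi s, Real.exp (-ξ) / ξ

/-- `I₂(t,s) = ∫_s^t e^{-ξ}/ξ² dξ`. -/
noncomputable def I2fun (t s : ℝ) : ℝ := ∫ ξ in s..t, Real.exp (-ξ) / ξ ^ 2

/-- `I₂(s) = ∫_s^∞ e^{-ξ}/ξ² dξ`. -/
noncomputable def I2inf (s : ℝ) : ℝ := ∫ ξ in Set.Ioi s, Real.exp (-ξ) / ξ ^ 2

/-- `J(t) = ∫_0^t (e^ξ - 1)/ξ dξ`. -/
noncomputable def Jfun (t : ℝ) : ℝ := ∫ ξ in (0:ℝ)..t, (Real.exp ξ - 1) / ξ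

open Polynomial Finset Nat

private lemma coeff_mul_XC0 (p : ℝ[X]) (c : ℝ) :
    (p * (X + C c)).coeff 0 = c * p.coeff 0 := by
  rw [mul_add, coeff_add, mul_coeff_zero, coeff_X_zero, mul_zero, zero_add, coeff_mul_C, mul_comm]

private lemma coeff_mul_XCs (p : ℝ[X]) (c : ℝ) (j : ℕ) :
    (p * (X + C c)).coeff (j + 1) = p.coeff j + c * p.coeff (j + 1) := by
  rw [mul_add, coeff_add, coeff_mul_X, coeff_mul_C, mul_comm]

private lemma stirling1_zero (j : ℕ) : stirling1 0 j = if j = 0 then 1 else 0 := by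
  simp [stirling1, Polynomial.coeff_one, eq_comm]

private lemma stirling1_succ_zero (k : ℕ) : stirling1 (k + 1) 0 = k * stirling1 k 0 := by
  unfold stirling1
  rw [Finset.prod_range_succ, coeff_mul_XC0]

private lemma stirling1_succ_succ (k j : ℕ) :
    stirling1 (k + 1) (j + 1) = stirling1 k j + k * stirling1 k (j + 1) := by
  unfold stirling1
  rw [Finset.prod_range_succ, coeff_mul_XCs]

private lemma stirling1_bounds (k : ℕ) : ∀ j, 0 ≤ stirling1 k j ∧ stirling1 k j ≤ k ! := by
  induction k with
  | zero =>
    intro j; rw [stirling1_zero]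
    split <;> norm_num [Nat.factorial]
  | succ k ih =>
    intro j
    have hk : (0:ℝ) ≤ (k:ℝ) := k.cast_nonneg
    have hfac : ((k+1)! : ℝ) = (k+1) * k ! := by
      rw [Nat.factorial_succ]; push_cast; ring
    cases j with
    | zero =>
      obtain ⟨h1, h2⟩ := ih 0
      rw [stirling1_succ_zero, hfac]
      constructor
      · exact mul_nonneg hk h1
      · calc (k:ℝ) * stirling1 k 0 ≤ (k:ℝ) * k ! := by gcongr
          _ ≤ ((k:ℝ)+1) * k ! := by
            have : (0:ℝ) ≤ (k ! : ℝ) := by positivity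
            nlinarith
    | succ j =>
      obtain ⟨h1, h2⟩ := ih j
      obtain ⟨h3, h4⟩ := ih (j+1)
      rw [stirling1_succ_succ, hfac]
      constructor
      · exact add_nonneg h1 (mul_nonneg hk h3)
      · have : (0:ℝ) ≤ (k ! : ℝ) := by positivity
        nlinarith

private noncomputable def dsc (m : ℕ) : ℝ[X] := ∏ i ∈ Finset.range m, (X - C (i : ℝ))

private lemma dsc_coeff (m : ℕ) : ∀ j, (dsc m).coeff j = (-1:ℝ)^(m+j) * stirling1 m j := by
  induction m with
  | zero =>
    intro j
    rw [stirling1_zero]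
    simp only [dsc, Finset.range_zero, Finset.prod_empty, Polynomial.coeff_one]
    split <;> simp_all
  | succ m ih =>
    intro j
    have hstep : dsc (m+1) = dsc m * (X + C (-(m:ℝ))) := by
      rw [dsc, dsc, Finset.prod_range_succ, map_neg, sub_eq_add_neg]
    cases j with
    | zero =>
      rw [hstep, coeff_mul_XC0, ih 0, stirling1_succ_zero, pow_succ]
      ring
    | succ j =>
      rw [hstep, coeff_mul_XCs, ih j, ih (j+1), stirling1_succ_succ]
      have h1 : (-1:ℝ)^(m+1+(j+1)) = (-1:ℝ)^(m+j) := by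
        have : m+1+(j+1) = (m+j) + 2 := by ring
        rw [this, pow_add]; norm_num
      have h2 : (-1:ℝ)^(m+(j+1)) = -(-1:ℝ)^(m+j) := by
        have : m+(j+1) = (m+j) + 1 := by ring
        rw [this, pow_succ]; ring
      rw [h1, h2]; ring

private lemma castDescFact (n : ℕ) : ∀ m, ((n.descFactorial m : ℕ) : ℝ) = ∏ i ∈ Finset.range m, ((n:ℝ) - i) := by
  intro m
  induction m with
  | zero => simp
  | succ m ih =>
    rcases le_or_gt (m+1) n with h | h
    · rw [Finset.prod_range_succ, ← ih, Nat.descFactorial_succ]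
      have hm : m ≤ n := by omega
      push_cast [Nat.cast_sub hm]
      ring
    · rw [Nat.descFactorial_eq_zero_iff_lt.mpr h]
      have hn : n ∈ Finset.range (m+1) := by
        rw [Finset.mem_range]; omega
      rw [Finset.prod_eq_zero hn (by simp)]
      simp

private lemma nat_vdm (k n : ℕ) :
    (n+1).ascFactorial k =
      ∑ m ∈ Finset.range (k+1), (k.choose m)^2 * (k-m)! * n.descFactorial m := by
  rw [Nat.ascFactorial_eq_factorial_mul_choose, Nat.add_choose_eq,
    Finset.Nat.sum_antidiagonal_eq_sum_range_succ_mk, Finset.mul_sum]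
  refine Finset.sum_congr rfl fun m hm => ?_
  have hm' : m ≤ k := by
    have := Finset.mem_range.mp hm; omega
  rw [Nat.descFactorial_eq_factorial_mul_choose, Nat.choose_symm hm',
    ← Nat.choose_mul_factorial_mul_factorial hm']
  ring

private lemma vdm_poly (k : ℕ) :
    (∏ i ∈ Finset.range k, (X + C ((i:ℝ)+1))) =
    ∑ m ∈ Finset.range (k+1), C ((((k.choose m)^2 * (k-m)! : ℕ)) : ℝ) * dsc m := by
  have hroots : ∀ n : ℕ, Polynomial.eval (n:ℝ)
      ((∏ i ∈ Finset.range k, (X + C ((i:ℝ)+1))) -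
        ∑ m ∈ Finset.range (k+1), C ((((k.choose m)^2 * (k-m)! : ℕ)) : ℝ) * dsc m) = 0 := by
    intro n
    rw [eval_sub, eval_prod, eval_finset_sum]
    have hL : ∀ K : ℕ, (∏ i ∈ Finset.range K, Polynomial.eval (n:ℝ) (X + C ((i:ℝ)+1)))
        = (((n+1).ascFactorial K : ℕ) : ℝ) := by
      intro K
      induction K with
      | zero => simp
      | succ K ihK =>
        rw [Finset.prod_range_succ, ihK, Nat.ascFactorial_succ]
        push_cast
        simp
        ring
    have hL := hL k
    have hR : ∀ m ∈ Finset.range (k+1),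
        Polynomial.eval (n:ℝ) (C ((((k.choose m)^2 * (k-m)! : ℕ)) : ℝ) * dsc m)
        = ((((k.choose m)^2 * (k-m)! * n.descFactorial m : ℕ)) : ℝ) := by
      intro m _
      rw [eval_mul, eval_C, dsc, eval_prod]
      have : (∏ i ∈ Finset.range m, Polynomial.eval (n:ℝ) (X - C (i:ℝ)))
          = ((n.descFactorial m : ℕ) : ℝ) := by
        rw [castDescFact]
        refine Finset.prod_congr rfl fun i _ => by simp
      rw [this]
      push_cast
      ring
    rw [hL, Finset.sum_congr rfl hR, ← Nat.cast_sum, ← nat_vdm]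
    simp
  have hinf : Set.Infinite {x : ℝ | Polynomial.IsRoot
      ((∏ i ∈ Finset.range k, (X + C ((i:ℝ)+1))) -
        ∑ m ∈ Finset.range (k+1), C ((((k.choose m)^2 * (k-m)! : ℕ)) : ℝ) * dsc m) x} :=
    Set.infinite_of_injective_forall_mem (f := fun n : ℕ => (n:ℝ))
      Nat.cast_injective (fun n => hroots n)
  exact sub_eq_zero.mp (Polynomial.eq_zero_of_infinite_isRoot _ hinf)

private lemma key_identity (k j : ℕ) :
    stirling1 (k+1) (j+1) =
    ∑ m ∈ Finset.range (k+1), ((((k.choose m)^2 * (k-m)! : ℕ)):ℝ) * ((-1:ℝ)^(m+j) * stirling1 m j) := by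
  have h1 : stirling1 (k+1) (j+1) = (∏ i ∈ Finset.range k, (X + C ((i:ℝ)+1))).coeff j := by
    show (∏ i ∈ Finset.range (k+1), (X + C ((i:ℝ)))).coeff (j+1) = _
    rw [Finset.prod_range_succ']
    simp only [Nat.cast_zero, map_zero, add_zero, coeff_mul_X]
    norm_num
  rw [h1, vdm_poly, Polynomial.finset_sum_coeff]
  refine Finset.sum_congr rfl fun m _ => ?_
  rw [Polynomial.coeff_C_mul, dsc_coeff]

private lemma key_div (j k : ℕ) :
    ∑ m ∈ Finset.range (k+1), (-1:ℝ)^(m+j) * stirling1 m j / ((m ! : ℝ) * m ! * (k-m)!) =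
    stirling1 (k+1) (j+1) / ((k ! : ℝ) * k !) := by
  rw [key_identity, Finset.sum_div]
  refine Finset.sum_congr rfl fun m hm => ?_
  have hm' : m ≤ k := by have := Finset.mem_range.mp hm; omega
  have hw : ((((k.choose m)^2 * (k-m)! : ℕ)):ℝ) * ((m ! : ℝ) * m ! * (k-m)!) = (k ! : ℝ) * k ! := by
    have h := Nat.choose_mul_factorial_mul_factorial hm'
    have h2 : ((k.choose m)^2 * (k-m)!) * (m ! * m ! * (k-m)!) = k ! * k ! := by
      calc ((k.choose m)^2 * (k-m)!) * (m ! * m ! * (k-m)!)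
          = (k.choose m * m ! * (k-m)!) * (k.choose m * m ! * (k-m)!) := by ring
        _ = k ! * k ! := by rw [h]
    exact_mod_cast h2
  have hmne : ((m ! : ℝ) * m ! * (k-m)!) ≠ 0 := by positivity
  have hkne : ((k ! : ℝ) * k !) ≠ 0 := by positivity
  rw [div_eq_div_iff hmne hkne]
  linarith [congrArg (fun x => x * ((-1:ℝ)^(m+j) * stirling1 m j)) hw]

private lemma summable_norm_F (j : ℕ) (t : ℝ) :
    Summable (fun k => ‖t ^ k / (k ! : ℝ) * (stirling1 k j / (k ! : ℝ))‖) := by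
  refine Summable.of_nonneg_of_le (fun k => norm_nonneg _) (fun k => ?_)
    (Real.summable_pow_div_factorial |t|)
  obtain ⟨h1, h2⟩ := stirling1_bounds k j
  have hfk : (0:ℝ) < (k ! : ℝ) := by positivity
  simp only [norm_mul, norm_div, Real.norm_eq_abs, abs_pow, abs_of_pos hfk, abs_of_nonneg h1]
  have hb : stirling1 k j / (k ! : ℝ) ≤ 1 := by
    rw [div_le_one hfk]; exact h2
  calc |t| ^ k / (k ! : ℝ) * (stirling1 k j / (k ! : ℝ))
      ≤ |t| ^ k / (k ! : ℝ) * 1 := by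
        apply mul_le_mul_of_nonneg_left hb (by positivity)
    _ = |t| ^ k / (k ! : ℝ) := by ring

private lemma summable_F (j : ℕ) (t : ℝ) :
    Summable (fun k => t ^ k / (k ! : ℝ) * (stirling1 k j / (k ! : ℝ))) :=
  (summable_norm_F j t).of_norm

private lemma pfn_zero (s : ℝ) : pfn 0 s = Real.exp (-s) := by
  have hz : ∀ k, stirling1 (k+1) 0 = 0 := by
    intro k
    induction k with
    | zero => rw [stirling1_succ_zero]; simp
    | succ k ih => rw [stirling1_succ_zero, ih]; ring
  have : (∑' k : ℕ, s ^ k / (k ! : ℝ) * (stirling1 k 0 / (k ! : ℝ))) = 1 := by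
    rw [tsum_eq_single 0]
    · rw [stirling1_zero]; norm_num
    · intro k hk
      obtain ⟨k', rfl⟩ : ∃ k', k = k' + 1 := ⟨k - 1, by omega⟩
      rw [hz k']; ring
  rw [pfn, this, mul_one]

private lemma exp_tsum (s : ℝ) : Real.exp s = ∑' n : ℕ, s ^ n / (n ! : ℝ) := by
  rw [Real.exp_eq_exp_ℝ, NormedSpace.exp_eq_tsum_div]

private noncomputable def useq (j : ℕ) (s : ℝ) (m : ℕ) : ℝ :=
  (-1:ℝ)^(m+j) * stirling1 m j / ((m ! : ℝ) * m !) * s ^ m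

private noncomputable def gseq (j : ℕ) (s : ℝ) (k : ℕ) : ℝ :=
  stirling1 (k+1) (j+1) / ((k ! : ℝ) * k !) * s ^ k

private noncomputable def cseq (j : ℕ) (s : ℝ) (k : ℕ) : ℝ :=
  stirling1 (k+1) (j+1) / ((k ! : ℝ) * (k+1)!) * s ^ k

private noncomputable def dseq (j : ℕ) (s : ℝ) (k : ℕ) : ℝ :=
  (k : ℝ) * stirling1 k (j+1) / ((k ! : ℝ) * k !) * s ^ k

private lemma summable_norm_useq (j : ℕ) (s : ℝ) : Summable (fun m => ‖useq j s m‖) := by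
  refine (summable_norm_F j (-s)).congr fun m => ?_
  unfold useq
  obtain ⟨h1, _⟩ := stirling1_bounds m j
  simp only [norm_mul, norm_div, Real.norm_eq_abs, abs_pow, abs_neg, abs_one, one_pow,
    abs_mul, abs_abs]
  rw [abs_of_nonneg h1, abs_of_pos (by positivity : (0:ℝ) < ((m !:ℝ)))]
  ring

private lemma summable_norm_exps (s : ℝ) : Summable (fun n => ‖s ^ n / (n ! : ℝ)‖) := by
  refine (Real.summable_pow_div_factorial |s|).congr fun n => ?_
  rw [norm_div, Real.norm_eq_abs, Real.norm_eq_abs, abs_pow, abs_of_pos (by positivity : (0:ℝ) < (n !:ℝ))]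

private lemma summable_norm_cseq (j : ℕ) (s : ℝ) : Summable (fun k => ‖cseq j s k‖) := by
  refine Summable.of_nonneg_of_le (fun k => norm_nonneg _) (fun k => ?_)
    (Real.summable_pow_div_factorial |s|)
  unfold cseq
  obtain ⟨h1, h2⟩ := stirling1_bounds (k+1) (j+1)
  have hk1 : (0:ℝ) < ((k+1)! : ℝ) := by positivity
  have hk0 : (0:ℝ) < ((k)! : ℝ) := by positivity
  simp only [norm_mul, norm_div, Real.norm_eq_abs, abs_pow]
  rw [abs_of_nonneg h1, abs_of_pos hk0, abs_of_pos hk1]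
  have hb : stirling1 (k+1) (j+1) / ((k ! : ℝ) * ((k+1)! : ℝ)) ≤ 1 / (k ! : ℝ) := by
    rw [div_le_div_iff₀ (by positivity) hk0]
    calc stirling1 (k+1) (j+1) * (k ! : ℝ) ≤ ((k+1)! : ℝ) * (k ! : ℝ) := by gcongr
      _ = 1 * ((k ! : ℝ) * ((k+1)! : ℝ)) := by ring
  calc stirling1 (k+1) (j+1) / ((k ! : ℝ) * ((k+1)!:ℝ)) * |s| ^ k
      ≤ 1 / (k ! : ℝ) * |s| ^ k := by
        apply mul_le_mul_of_nonneg_right hb (by positivity)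
    _ = |s| ^ k / (k ! : ℝ) := by ring

private lemma summable_cseq (j : ℕ) (s : ℝ) : Summable (cseq j s) :=
  (summable_norm_cseq j s).of_norm

private lemma hB (j : ℕ) (s : ℝ) (k : ℕ) :
    ∑ m ∈ Finset.range (k+1), useq j s m * (s ^ (k-m) / ((k-m)! : ℝ)) = gseq j s k := by
  unfold gseq
  rw [← key_div j k, Finset.sum_mul]
  refine Finset.sum_congr rfl fun m hm => ?_
  have hm' : m ≤ k := by have := Finset.mem_range.mp hm; omega
  have hpow : s ^ m * s ^ (k-m) = s ^ k := by
    rw [← pow_add]; congr 1; omega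
  unfold useq
  calc (-1:ℝ)^(m+j) * stirling1 m j / ((m ! : ℝ) * m !) * s ^ m * (s ^ (k-m) / ((k-m)! : ℝ))
      = (-1:ℝ)^(m+j) * stirling1 m j / ((m ! : ℝ) * m ! * ((k-m)! : ℝ)) * (s ^ m * s ^ (k-m)) := by
        ring
    _ = (-1:ℝ)^(m+j) * stirling1 m j / ((m ! : ℝ) * m ! * ((k-m)! : ℝ)) * s ^ k := by rw [hpow]

private lemma cauchy_eq (j : ℕ) (s : ℝ) :
    (∑' m, useq j s m) * (∑' n, s ^ n / (n ! : ℝ)) = ∑' k, gseq j s k := by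
  rw [tsum_mul_tsum_eq_tsum_sum_antidiagonal_of_summable_norm
    (summable_norm_useq j s) (summable_norm_exps s)]
  refine tsum_congr fun k => ?_
  rw [Finset.Nat.sum_antidiagonal_eq_sum_range_succ_mk]
  exact hB j s k

private lemma summable_gseq (j : ℕ) (s : ℝ) : Summable (gseq j s) := by
  have h := summable_sum_mul_antidiagonal_of_summable_mul
    (summable_mul_of_summable_norm (summable_norm_useq j s) (summable_norm_exps s))
  refine h.congr fun k => ?_
  rw [Finset.Nat.sum_antidiagonal_eq_sum_range_succ_mk]
  exact hB j s k

private lemma integrand_eq (j : ℕ) (s : ℝ) (hs : s ≠ 0) :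
    ((-1:ℝ)^j * pfn j (-s) - Real.exp s * pfn j s) / s = ∑' k, cseq j s k := by
  -- rewrite the two pfn's
  have hLc : (-1:ℝ)^j * pfn j (-s) = Real.exp s * ∑' m, useq j s m := by
    rw [pfn, neg_neg]
    rw [show (-1:ℝ)^j * (Real.exp s * ∑' k : ℕ, (-s) ^ k / (k ! : ℝ) * (stirling1 k j / (k ! : ℝ)))
      = Real.exp s * ((-1:ℝ)^j * ∑' k : ℕ, (-s) ^ k / (k ! : ℝ) * (stirling1 k j / (k ! : ℝ))) from by ring]
    congr 1
    rw [← tsum_mul_left]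
    refine tsum_congr fun m => ?_
    unfold useq
    rw [neg_pow, pow_add]
    ring
  have hLb : Real.exp s * pfn j s = ∑' k : ℕ, s ^ k / (k ! : ℝ) * (stirling1 k j / (k ! : ℝ)) := by
    rw [pfn, ← mul_assoc, ← Real.exp_add, add_neg_cancel, Real.exp_zero, one_mul]
  rw [hLc, hLb]
  have hnum : Real.exp s * (∑' m, useq j s m)
      - (∑' k : ℕ, s ^ k / (k ! : ℝ) * (stirling1 k j / (k ! : ℝ)))
      = ∑' k, dseq j s k := by
    rw [exp_tsum s, mul_comm, cauchy_eq j s]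
    rw [← Summable.tsum_sub (summable_gseq j s) (summable_F j s)]
    refine tsum_congr fun k => ?_
    unfold gseq dseq
    rw [stirling1_succ_succ]
    ring
  rw [hnum]
  -- now show ∑' dseq = s * ∑' cseq
  have hC : HasSum (cseq j s) (∑' k, cseq j s k) := (summable_cseq j s).hasSum
  have hf : HasSum (fun k => dseq j s (k+1)) (s * ∑' k, cseq j s k) := by
    refine (hC.mul_left s).congr_fun fun k => ?_
    unfold cseq dseq
    have h1 : ((k+1)! : ℝ) = ((k:ℝ)+1) * (k ! : ℝ) := by
      rw [Nat.factorial_succ]; push_cast; ring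
    have hk0 : (0:ℝ) < (k ! : ℝ) := by positivity
    push_cast [h1]
    field_simp
    ring
  have hd : HasSum (dseq j s) (s * ∑' k, cseq j s k) := by
    have := (hasSum_nat_add_iff (f := dseq j s) 1).mp hf
    simpa [dseq] using this
  rw [hd.tsum_eq, mul_comm, mul_div_assoc, div_self hs, mul_one]

private lemma integral_eq (j : ℕ) (t : ℝ) (ht : 0 ≤ t) :
    (∫ s in (0:ℝ)..t, ((-1:ℝ)^j * pfn j (-s) - Real.exp s * pfn j s) / s) =
    ∑' k : ℕ, t ^ k / (k ! : ℝ) * (stirling1 k (j+1) / (k ! : ℝ)) := by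
  rw [intervalIntegral.integral_of_le ht]
  rw [MeasureTheory.setIntegral_congr_fun measurableSet_Ioc
    (fun s hs => integrand_eq j s (ne_of_gt hs.1))]
  have hcoef : ∀ k : ℕ, |stirling1 (k+1) (j+1) / ((k ! : ℝ) * ((k+1)! : ℝ))| ≤ 1 / (k ! : ℝ) := by
    intro k
    obtain ⟨h1, h2⟩ := stirling1_bounds (k+1) (j+1)
    have hk0 : (0:ℝ) < (k ! : ℝ) := by positivity
    have hk1 : (0:ℝ) < ((k+1)! : ℝ) := by positivity
    rw [abs_of_nonneg (by positivity)]
    rw [div_le_div_iff₀ (by positivity) hk0]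
    calc stirling1 (k+1) (j+1) * (k ! : ℝ) ≤ ((k+1)! : ℝ) * (k ! : ℝ) := by gcongr
      _ = 1 * ((k ! : ℝ) * ((k+1)! : ℝ)) := by ring
  have hF_int : ∀ k : ℕ, MeasureTheory.Integrable (fun s => cseq j s k)
      (MeasureTheory.volume.restrict (Set.Ioc (0:ℝ) t)) := by
    intro k
    have hc : Continuous (fun s : ℝ => cseq j s k) := by
      unfold cseq; exact continuous_const.mul (continuous_pow k)
    exact hc.integrableOn_Ioc
  have hF_sum : Summable (fun k => ∫ s in Set.Ioc (0:ℝ) t, ‖cseq j s k‖) := by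
    refine Summable.of_nonneg_of_le
      (fun k => MeasureTheory.integral_nonneg (fun s => norm_nonneg _)) (fun k => ?_)
      ((Real.summable_pow_div_factorial t).mul_right t)
    have hmono : ∀ s ∈ Set.Ioc (0:ℝ) t, ‖cseq j s k‖ ≤ t ^ k / (k ! : ℝ) := by
      intro s hs
      unfold cseq
      rw [norm_mul, norm_div, Real.norm_eq_abs, Real.norm_eq_abs, Real.norm_eq_abs, abs_pow]
      have h1 : |s| ≤ t := by rw [abs_of_pos hs.1]; exact hs.2
      have h2 : |s| ^ k ≤ t ^ k := by
        apply pow_le_pow_left₀ (abs_nonneg s) h1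
      calc |stirling1 (k+1) (j+1)| / |(k ! : ℝ) * ((k+1)! : ℝ)| * |s| ^ k
          ≤ (1 / (k ! : ℝ)) * t ^ k := by
            apply mul_le_mul _ h2 (by positivity) (by positivity)
            rw [← abs_div]
            exact hcoef k
        _ = t ^ k / (k ! : ℝ) := by ring
    calc (∫ s in Set.Ioc (0:ℝ) t, ‖cseq j s k‖)
        ≤ ∫ _ in Set.Ioc (0:ℝ) t, t ^ k / (k ! : ℝ) := by
          apply MeasureTheory.setIntegral_mono_on ((hF_int k).norm)
            ((MeasureTheory.integrableOn_const_iff).mpr (Or.inr (by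
              rw [Real.volume_Ioc]; exact ENNReal.ofReal_lt_top)))
            measurableSet_Ioc hmono
      _ = t ^ k / (k ! : ℝ) * t := by
          rw [MeasureTheory.setIntegral_const, measureReal_def, Real.volume_Ioc, smul_eq_mul,
            ENNReal.toReal_ofReal (by linarith)]
          ring
  rw [← MeasureTheory.integral_tsum_of_summable_integral_norm hF_int hF_sum]
  -- now evaluate each integral
  have hval : ∀ k : ℕ, (∫ s in Set.Ioc (0:ℝ) t, cseq j s k)
      = stirling1 (k+1) (j+1) / ((k ! : ℝ) * ((k+1)! : ℝ)) * (t ^ (k+1) / ((k:ℝ)+1)) := by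
    intro k
    unfold cseq
    rw [MeasureTheory.integral_const_mul]
    congr 1
    rw [← intervalIntegral.integral_of_le ht, integral_pow]
    push_cast
    rw [zero_pow (by omega : k + 1 ≠ 0)]
    ring
  rw [tsum_congr hval]
  -- reindex
  have h0 : t ^ 0 / (0! : ℝ) * (stirling1 0 (j+1) / (0! : ℝ)) = 0 := by
    rw [stirling1_zero]; norm_num
  have hFs : HasSum (fun k : ℕ => t ^ k / (k ! : ℝ) * (stirling1 k (j+1) / (k ! : ℝ)))
      (∑' k : ℕ, t ^ k / (k ! : ℝ) * (stirling1 k (j+1) / (k ! : ℝ))) :=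
    (summable_F (j+1) t).hasSum
  have hshift : HasSum (fun k : ℕ => t ^ (k+1) / ((k+1)! : ℝ) * (stirling1 (k+1) (j+1) / ((k+1)! : ℝ)))
      (∑' k : ℕ, t ^ k / (k ! : ℝ) * (stirling1 k (j+1) / (k ! : ℝ))) := by
    refine (hasSum_nat_add_iff (f := fun k : ℕ => t ^ k / (k ! : ℝ) * (stirling1 k (j+1) / (k ! : ℝ))) 1).mpr ?_
    have hz : stirling1 0 (j+1) = 0 := by rw [stirling1_zero]; simp
    simpa [hz] using hFs
  refine HasSum.tsum_eq (hshift.congr_fun fun k => ?_)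
  have h1 : ((k+1)! : ℝ) = ((k:ℝ)+1) * (k ! : ℝ) := by
    rw [Nat.factorial_succ]; push_cast; ring
  have hk0 : (0:ℝ) < (k ! : ℝ) := by positivity
  rw [h1]
  field_simp

private lemma pfn_succ (j : ℕ) (t : ℝ) (ht : 0 ≤ t) :
    pfn (j+1) t = Real.exp (-t) * ∫ s in (0:ℝ)..t,
      ((-1:ℝ)^j * pfn j (-s) - Real.exp s * pfn j s) / s := by
  rw [integral_eq j t ht, pfn]


/-- The recursion `p_j(t) = e^{-t}∫_0^t ((-1)^{j-1} p_{j-1}(-s) - e^s p_{j-1}(s))/s ds`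
for `j ≥ 1`, `t ≥ 0`; in particular `p_1(t) = e^{-t}∫_0^t (e^s - 1)/s ds`. -/
theorem stmt12 (j : ℕ) (hj : 1 ≤ j) (t : ℝ) (ht : 0 ≤ t) :
    pfn j t = Real.exp (-t) * ∫ s in (0:ℝ)..t,
        ((-1 : ℝ) ^ (j - 1) * pfn (j - 1) (-s) - Real.exp s * pfn (j - 1) s) / s ∧
    pfn 1 t = Real.exp (-t) * ∫ s in (0:ℝ)..t, (Real.exp s - 1) / s := by
  obtain ⟨j', rfl⟩ : ∃ j', j = j' + 1 := ⟨j - 1, by omega⟩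
  constructor
  · simpa using pfn_succ j' t ht
  · rw [show (1:ℕ) = 0 + 1 from rfl, pfn_succ 0 t ht]
    congr 1
    apply intervalIntegral.integral_congr
    intro s _
    simp only [pow_zero, one_mul, pfn_zero, neg_neg]
    rw [← Real.exp_add, add_neg_cancel, Real.exp_zero]
end

section
/- The equation q_0(t) = q_1(t), where q_0(t) = (1 − e^{−t})/t and q_1(t) = (−J(−t) − e^{−t}·J(t))/t, has a unique positive root t_P (numerically t_P = 2.11982…); equivalently, t_P is the unique positive root of −J(−t) − e^{−t}·J(t) = 1 − e^{−t}. Moreover, for every t > 0, q_0(t) > q_1(t) if and only if t < t_P. -/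
open MeasureTheory ProbabilityTheory Real

open MeasureTheory ProbabilityTheory Real

/- ---------------- Auxiliary development ---------------- -/

section Aux

open Filter Set Metric
open scoped Topology

noncomputable def Efn (x : ℝ) : ℝ := ∑' k : ℕ, x ^ k / ((k + 1).factorial : ℝ)

noncomputable def Gfn (x : ℝ) : ℝ :=
  ∑' k : ℕ, x ^ (k + 1) / (((k : ℝ) + 1) * ((k + 1).factorial : ℝ))

noncomputable def Ffn (t : ℝ) : ℝ := -Gfn (-t) - Real.exp (-t) * Gfn t - 1 + Real.exp (-t)

lemma fact_cast_pos (n : ℕ) : (0 : ℝ) < (n.factorial : ℝ) := by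
  exact_mod_cast n.factorial_pos

lemma summable_Efn (x : ℝ) : Summable fun k : ℕ => x ^ k / ((k + 1).factorial : ℝ) := by
  apply Summable.of_norm_bounded (Real.summable_pow_div_factorial |x|)
  intro k
  rw [Real.norm_eq_abs, abs_div, abs_pow, abs_of_pos (fact_cast_pos (k + 1))]
  apply div_le_div_of_nonneg_left (by positivity) (fact_cast_pos k)
  exact_mod_cast Nat.factorial_le (Nat.le_succ k)

lemma summable_Gfn (x : ℝ) :
    Summable fun k : ℕ => x ^ (k + 1) / (((k : ℝ) + 1) * ((k + 1).factorial : ℝ)) := by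
  have h : Summable fun k : ℕ => |x| ^ (k + 1) / (((k + 1).factorial : ℝ)) :=
    (summable_nat_add_iff 1).2 (Real.summable_pow_div_factorial |x|)
  apply Summable.of_norm_bounded h
  intro k
  have hk : (0:ℝ) < (k : ℝ) + 1 := by positivity
  rw [Real.norm_eq_abs, abs_div, abs_pow,
    abs_of_pos (by positivity : (0:ℝ) < ((k : ℝ) + 1) * ((k + 1).factorial : ℝ))]
  apply div_le_div_of_nonneg_left (by positivity) (fact_cast_pos (k + 1))
  nlinarith [fact_cast_pos (k + 1), hk]

lemma Efn_zero : Efn 0 = 1 := by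
  rw [Efn, tsum_eq_single 0 (fun k hk => by simp [zero_pow hk])]
  simp

lemma Gfn_zero : Gfn 0 = 0 := by
  have : ∀ k : ℕ, (0:ℝ) ^ (k + 1) / (((k : ℝ) + 1) * ((k + 1).factorial : ℝ)) = 0 := by
    intro k; simp
  simp only [Gfn, this, tsum_zero]

lemma exp_eq_tsum_real (x : ℝ) : Real.exp x = ∑' n : ℕ, x ^ n / (n.factorial : ℝ) := by
  rw [Real.exp_eq_exp_ℝ, NormedSpace.exp_eq_tsum_div]

lemma mul_Efn (x : ℝ) : x * Efn x = Real.exp x - 1 := by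
  rw [exp_eq_tsum_real, Summable.tsum_eq_zero_add (Real.summable_pow_div_factorial x)]
  simp only [pow_zero, Nat.factorial_zero, Nat.cast_one, div_one]
  rw [add_sub_cancel_left, Efn, ← tsum_mul_left]
  apply tsum_congr
  intro k
  rw [pow_succ]
  ring

lemma Efn_eq {x : ℝ} (hx : x ≠ 0) : Efn x = (Real.exp x - 1) / x := by
  rw [← mul_Efn x, mul_comm, mul_div_assoc, div_self hx, mul_one]

lemma Efn_pos (x : ℝ) : 0 < Efn x := by
  rcases eq_or_ne x 0 with h | h
  · rw [h, Efn_zero]; norm_num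
  rw [Efn_eq h]
  rcases lt_or_gt_of_ne h with hneg | hpos
  · apply div_pos_of_neg_of_neg _ hneg
    simpa using Real.exp_lt_exp.mpr hneg
  · apply div_pos _ hpos
    simpa using Real.exp_lt_exp.mpr hpos

lemma Efn_neg (x : ℝ) : Efn (-x) = Real.exp (-x) * Efn x := by
  rcases eq_or_ne x 0 with h | h
  · simp [h, Efn_zero]
  rw [Efn_eq (neg_ne_zero.mpr h), Efn_eq h, Real.exp_neg]
  have := Real.exp_pos x
  field_simp
  ring

lemma continuous_Efn : Continuous Efn := by
  rw [continuous_iff_continuousAt]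
  intro x
  rcases eq_or_ne x 0 with rfl | hx
  · have h1 : HasDerivAt Real.exp 1 0 := by simpa using Real.hasDerivAt_exp 0
    have h2 : Tendsto (slope Real.exp 0) (𝓝[≠] 0) (𝓝 1) :=
      hasDerivAt_iff_tendsto_slope.mp h1
    have h3 : Tendsto Efn (𝓝[≠] 0) (𝓝 1) := by
      apply h2.congr'
      filter_upwards [self_mem_nhdsWithin] with y hy
      rw [slope_def_field, Efn_eq hy]
      simp [div_eq_div_iff]
    rw [ContinuousAt, Efn_zero, ← nhdsNE_sup_pure 0, tendsto_sup]
    exact ⟨h3, by simpa [Efn_zero] using tendsto_pure_nhds Efn 0⟩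
  · have hcont : ContinuousAt (fun y : ℝ => (Real.exp y - 1) / y) x :=
      ((Real.continuous_exp.sub continuous_const).continuousAt).div continuousAt_id hx
    apply hcont.congr
    filter_upwards [isOpen_compl_singleton.mem_nhds hx] with y hy
    exact (Efn_eq hy).symm

lemma hasDerivAt_Gfn (x : ℝ) : HasDerivAt Gfn (Efn x) x := by
  have hterm : ∀ (k : ℕ) (y : ℝ),
      HasDerivAt (fun z : ℝ => z ^ (k + 1) / (((k : ℝ) + 1) * ((k + 1).factorial : ℝ)))
        (y ^ k / ((k + 1).factorial : ℝ)) y := by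
    intro k y
    have h := (hasDerivAt_pow (k + 1) y).div_const (((k : ℝ) + 1) * ((k + 1).factorial : ℝ))
    refine h.congr_deriv ?_
    have hk : ((k : ℝ) + 1) ≠ 0 := by positivity
    have hf : ((k + 1).factorial : ℝ) ≠ 0 := (fact_cast_pos _).ne'
    simp only [Nat.add_sub_cancel, Nat.cast_add, Nat.cast_one]
    field_simp
  set R := |x| + 1 with hR
  have hR1 : (1 : ℝ) ≤ R := by simp [hR, abs_nonneg]
  have hu : Summable fun k : ℕ => R ^ k / ((k + 1).factorial : ℝ) := summable_Efn R
  have := hasDerivAt_tsum_of_isPreconnected hu (isOpen_ball (x := (0:ℝ)) (ε := R))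
    (convex_ball (0:ℝ) R).isPreconnected
    (fun k y _ => hterm k y)
    (fun k y hy => ?_) (y₀ := 0) ?_ ?_ (y := x) ?_
  · exact this
  · rw [Real.norm_eq_abs, abs_div, abs_pow, abs_of_pos (fact_cast_pos _)]
    have hyR : |y| ≤ R := by
      have := mem_ball_zero_iff.mp hy
      rw [Real.norm_eq_abs] at this
      linarith
    gcongr
  · exact mem_ball_zero_iff.mpr (by rw [Real.norm_eq_abs, abs_zero]; positivity)
  · apply Summable.congr summable_zero
    intro k
    simp
  · exact mem_ball_zero_iff.mpr (by rw [Real.norm_eq_abs]; simp [hR])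

lemma Jfun_eq_Gfn (t : ℝ) : Jfun t = Gfn t := by
  have hae : ∀ᵐ ξ : ℝ, ξ ≠ 0 := by
    have h0 : volume ({0} : Set ℝ) = 0 := measure_singleton 0
    have := measure_eq_zero_iff_ae_notMem.mp h0
    simpa using this
  have h1 : Jfun t = ∫ ξ in (0:ℝ)..t, Efn ξ := by
    apply intervalIntegral.integral_congr_ae
    filter_upwards [hae] with ξ hξ _
    exact (Efn_eq hξ).symm
  rw [h1, intervalIntegral.integral_eq_sub_of_hasDerivAt
    (fun x _ => hasDerivAt_Gfn x) (continuous_Efn.intervalIntegrable 0 t), Gfn_zero, sub_zero]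

lemma tsum_abs_le_of_le {g : ℕ → ℝ} {c r : ℝ} (hc : 0 ≤ c) (hr0 : 0 ≤ r) (hr : r ≤ 1/2)
    (hb : ∀ k, |g k| ≤ c * r ^ k) : |∑' k, g k| ≤ 2 * c := by
  have hr1 : r < 1 := lt_of_le_of_lt hr (by norm_num)
  have hgeo : Summable fun k : ℕ => c * r ^ k :=
    (summable_geometric_of_lt_one hr0 hr1).mul_left c
  have habs : Summable fun k : ℕ => |g k| :=
    Summable.of_nonneg_of_le (fun k => abs_nonneg _) hb hgeo
  have hnorm : Summable fun k : ℕ => ‖g k‖ := by simpa [Real.norm_eq_abs] using habs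
  have h1 : ‖∑' k, g k‖ ≤ ∑' k, ‖g k‖ := norm_tsum_le_tsum_norm hnorm
  rw [Real.norm_eq_abs] at h1
  have h2 : ∑' k, ‖g k‖ = ∑' k, |g k| := by simp [Real.norm_eq_abs]
  have h3 : (∑' k, |g k|) ≤ ∑' k : ℕ, c * r ^ k := Summable.tsum_le_tsum hb habs hgeo
  have h4 : ∑' k : ℕ, c * r ^ k = c * (1 - r)⁻¹ := by
    rw [tsum_mul_left, tsum_geometric_of_lt_one hr0 hr1]
  have h5 : (1 - r)⁻¹ ≤ 2 := by
    rw [inv_le_comm₀ (by linarith) (by norm_num)]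
    linarith
  have h6 : c * (1 - r)⁻¹ ≤ c * 2 := mul_le_mul_of_nonneg_left h5 hc
  linarith

lemma nat_fact_ineq (n k : ℕ) :
    (n + 1) * (n + 1).factorial * (n + 1) ^ k ≤ (k + n + 1) * (k + n + 1).factorial := by
  induction k with
  | zero => simp
  | succ k ih =>
    rw [show k + 1 + n + 1 = (k + n + 1) + 1 by omega, Nat.factorial_succ, pow_succ]
    have hm : n + 1 ≤ k + n + 1 + 1 := by omega
    calc (n + 1) * (n + 1).factorial * ((n + 1) ^ k * (n + 1))
        = ((n + 1) * (n + 1).factorial * (n + 1) ^ k) * (n + 1) := by ring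
      _ ≤ ((k + n + 1) * (k + n + 1).factorial) * (n + 1) := Nat.mul_le_mul_right _ ih
      _ = ((k + n + 1) * (n + 1)) * (k + n + 1).factorial := by ring
      _ ≤ ((k + n + 1 + 1) * (k + n + 1 + 1)) * (k + n + 1).factorial :=
          Nat.mul_le_mul_right _ (Nat.mul_le_mul (by omega) hm)
      _ = (k + n + 1 + 1) * ((k + n + 1 + 1) * (k + n + 1).factorial) := by ring

lemma nat_fact_ineq' (n k : ℕ) : n.factorial * (n + 1) ^ k ≤ (k + n).factorial := by
  induction k with
  | zero => simp
  | succ k ih =>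
    rw [show k + 1 + n = (k + n) + 1 by omega, Nat.factorial_succ, pow_succ]
    calc n.factorial * ((n + 1) ^ k * (n + 1))
        = (n.factorial * (n + 1) ^ k) * (n + 1) := by ring
      _ ≤ (k + n).factorial * (n + 1) := Nat.mul_le_mul_right _ ih
      _ ≤ (k + n).factorial * (k + n + 1) := Nat.mul_le_mul_left _ (by omega)
      _ = (k + n + 1) * (k + n).factorial := by ring

lemma Gfn_approx (x : ℝ) (n : ℕ) (hn : 2 * |x| ≤ (n : ℝ) + 1) :
    |Gfn x - ∑ k ∈ Finset.range n, x ^ (k + 1) / (((k : ℝ) + 1) * ((k + 1).factorial : ℝ))|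
      ≤ 2 * (|x| ^ (n + 1) / (((n : ℝ) + 1) * ((n + 1).factorial : ℝ))) := by
  have hs := summable_Gfn x
  have hsplit := Summable.sum_add_tsum_nat_add n hs
  have heq : Gfn x - ∑ k ∈ Finset.range n, x ^ (k + 1) / (((k : ℝ) + 1) * ((k + 1).factorial : ℝ))
      = ∑' k : ℕ, x ^ (k + n + 1) / (((k + n : ℕ) : ℝ) + 1) / (((k + n + 1).factorial : ℝ)) := by
    rw [Gfn, ← hsplit]
    rw [add_sub_cancel_left]
    apply tsum_congr
    intro k
    rw [div_div]
  rw [heq]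
  set c := |x| ^ (n + 1) / (((n : ℝ) + 1) * ((n + 1).factorial : ℝ)) with hc
  have hnpos : (0:ℝ) < (n:ℝ) + 1 := by positivity
  apply tsum_abs_le_of_le (c := c) (r := |x| / ((n : ℝ) + 1)) (by positivity) (by positivity)
  · rw [div_le_iff₀ hnpos]; linarith
  · intro k
    have hd1 : (0:ℝ) < ((k + n : ℕ) : ℝ) + 1 := by positivity
    rw [abs_div, abs_div, abs_pow, abs_of_pos hd1, abs_of_pos (fact_cast_pos _), div_div]
    rw [hc, div_pow, div_mul_div_comm, ← pow_add]
    rw [show n + 1 + k = k + n + 1 by omega]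
    apply div_le_div_of_nonneg_left (by positivity) (by positivity)
    have h := nat_fact_ineq n k
    have h2 : (((n + 1) * (n + 1).factorial * (n + 1) ^ k : ℕ) : ℝ)
        ≤ (((k + n + 1) * (k + n + 1).factorial : ℕ) : ℝ) := by exact_mod_cast h
    push_cast at h2 ⊢
    nlinarith [h2]

lemma exp_approx (x : ℝ) (n : ℕ) (hn : 2 * |x| ≤ (n : ℝ) + 1) :
    |Real.exp x - ∑ k ∈ Finset.range n, x ^ k / (k.factorial : ℝ)|
      ≤ 2 * (|x| ^ n / (n.factorial : ℝ)) := by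
  have hs : Summable fun k : ℕ => x ^ k / (k.factorial : ℝ) := Real.summable_pow_div_factorial x
  have hsplit := Summable.sum_add_tsum_nat_add n hs
  have heq : Real.exp x - ∑ k ∈ Finset.range n, x ^ k / (k.factorial : ℝ)
      = ∑' k : ℕ, x ^ (k + n) / (((k + n).factorial : ℝ)) := by
    rw [exp_eq_tsum_real, ← hsplit, add_sub_cancel_left]
  rw [heq]
  set c := |x| ^ n / ((n.factorial : ℝ)) with hc
  have hnpos : (0:ℝ) < (n:ℝ) + 1 := by positivity
  apply tsum_abs_le_of_le (c := c) (r := |x| / ((n : ℝ) + 1)) (by positivity) (by positivity)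
  · rw [div_le_iff₀ hnpos]; linarith
  · intro k
    rw [abs_div, abs_pow, abs_of_pos (fact_cast_pos _)]
    rw [hc, div_pow, div_mul_div_comm, ← pow_add]
    rw [show n + k = k + n by omega]
    apply div_le_div_of_nonneg_left (by positivity) (by positivity)
    have h := nat_fact_ineq' n k
    have h2 : ((n.factorial * (n + 1) ^ k : ℕ) : ℝ) ≤ (((k + n).factorial : ℕ) : ℝ) := by
      exact_mod_cast h
    push_cast at h2 ⊢
    nlinarith [h2]

lemma hasDerivAt_Ffn (t : ℝ) : HasDerivAt Ffn (Real.exp (-t) * (Gfn t - 1)) t := by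
  have hexp : HasDerivAt (fun t : ℝ => Real.exp (-t)) (-Real.exp (-t)) t := by
    have h := (Real.hasDerivAt_exp (-t)).comp t (hasDerivAt_neg t)
    simp at h
    exact h
  have hGm : HasDerivAt (fun t : ℝ => Gfn (-t)) (-Efn (-t)) t := by
    have h := (hasDerivAt_Gfn (-t)).comp t (hasDerivAt_neg t)
    simp at h
    exact h
  have h := ((hGm.neg.sub (hexp.mul (hasDerivAt_Gfn t))).sub_const 1).add hexp
  refine h.congr_deriv ?_
  rw [Efn_neg t]
  ring

lemma continuous_Gfn : Continuous Gfn := by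
  have : Differentiable ℝ Gfn := fun t => (hasDerivAt_Gfn t).differentiableAt
  exact this.continuous

lemma continuous_Ffn : Continuous Ffn := by
  have : Differentiable ℝ Ffn := fun t => (hasDerivAt_Ffn t).differentiableAt
  exact this.continuous

lemma strictMono_Gfn : StrictMono Gfn :=
  strictMono_of_deriv_pos fun x => by
    rw [(hasDerivAt_Gfn x).deriv]; exact Efn_pos x

lemma Ffn_zero : Ffn 0 = 0 := by
  simp [Ffn, Gfn_zero, Real.exp_zero]

lemma one_le_Gfn_one : 1 ≤ Gfn 1 := by
  have hs := summable_Gfn 1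
  have h := Summable.sum_le_tsum (Finset.range 1) (fun k _ => by positivity) hs
  have h1 : ∑ k ∈ Finset.range 1, (1:ℝ) ^ (k + 1) / (((k : ℝ) + 1) * ((k + 1).factorial : ℝ)) = 1 := by
    norm_num
  rw [h1] at h
  exact h

set_option maxHeartbeats 2000000 in
lemma hGa_lo : (4.0821642233 : ℝ) ≤ Gfn 2.11982 := by
  have h := Gfn_approx (2.11982 : ℝ) 18
    (by rw [abs_of_pos (by norm_num : (0:ℝ) < 2.11982)]; norm_num)
  rw [abs_of_pos (by norm_num : (0:ℝ) < 2.11982)] at h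
  have h1 := (abs_le.mp h).1
  have h2 : (4.0821642233 : ℝ) ≤
      (∑ k ∈ Finset.range 18, (2.11982:ℝ) ^ (k + 1) / (((k : ℝ) + 1) * ((k + 1).factorial : ℝ)))
        - 2 * ((2.11982:ℝ) ^ (18 + 1) / ((((18:ℕ) : ℝ) + 1) * (((18 + 1).factorial : ℕ) : ℝ))) := by
    norm_num [Finset.sum_range_succ, Nat.factorial]
  linarith

set_option maxHeartbeats 2000000 in
lemma hGma_lo : (-1.3700221576 : ℝ) ≤ Gfn (-2.11982) := by
  have h := Gfn_approx (-2.11982 : ℝ) 18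
    (by rw [abs_neg, abs_of_pos (by norm_num : (0:ℝ) < 2.11982)]; norm_num)
  rw [abs_neg, abs_of_pos (by norm_num : (0:ℝ) < 2.11982)] at h
  have h1 := (abs_le.mp h).1
  have h2 : (-1.3700221576 : ℝ) ≤
      (∑ k ∈ Finset.range 18, (-2.11982:ℝ) ^ (k + 1) / (((k : ℝ) + 1) * ((k + 1).factorial : ℝ)))
        - 2 * ((2.11982:ℝ) ^ (18 + 1) / ((((18:ℕ) : ℝ) + 1) * (((18 + 1).factorial : ℕ) : ℝ))) := by
    norm_num [Finset.sum_range_succ, Nat.factorial]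
  linarith

set_option maxHeartbeats 2000000 in
lemma hEa_bounds : (0.120053236149 : ℝ) ≤ Real.exp (-2.11982)
    ∧ Real.exp (-2.11982) ≤ (0.120053236150 : ℝ) := by
  have h := exp_approx (-2.11982 : ℝ) 25
    (by rw [abs_neg, abs_of_pos (by norm_num : (0:ℝ) < 2.11982)]; norm_num)
  rw [abs_neg, abs_of_pos (by norm_num : (0:ℝ) < 2.11982)] at h
  have h1 := abs_le.mp h
  have h2 : (0.120053236149 : ℝ) ≤
      (∑ k ∈ Finset.range 25, (-2.11982:ℝ) ^ k / ((k.factorial : ℕ) : ℝ))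
        - 2 * ((2.11982:ℝ) ^ 25 / (((25).factorial : ℕ) : ℝ)) := by
    norm_num [Finset.sum_range_succ, Nat.factorial]
  have h3 : (∑ k ∈ Finset.range 25, (-2.11982:ℝ) ^ k / ((k.factorial : ℕ) : ℝ))
        + 2 * ((2.11982:ℝ) ^ 25 / (((25).factorial : ℕ) : ℝ)) ≤ (0.120053236150 : ℝ) := by
    norm_num [Finset.sum_range_succ, Nat.factorial]
  constructor <;> [linarith [h1.1]; linarith [h1.2]]

set_option maxHeartbeats 2000000 in
lemma hGb_hi : Gfn 2.11983 ≤ (4.0821988002 : ℝ) := by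
  have h := Gfn_approx (2.11983 : ℝ) 18
    (by rw [abs_of_pos (by norm_num : (0:ℝ) < 2.11983)]; norm_num)
  rw [abs_of_pos (by norm_num : (0:ℝ) < 2.11983)] at h
  have h1 := (abs_le.mp h).2
  have h2 : (∑ k ∈ Finset.range 18, (2.11983:ℝ) ^ (k + 1) / (((k : ℝ) + 1) * ((k + 1).factorial : ℝ)))
        + 2 * ((2.11983:ℝ) ^ (18 + 1) / ((((18:ℕ) : ℝ) + 1) * (((18 + 1).factorial : ℕ) : ℝ)))
        ≤ (4.0821988002 : ℝ) := by
    norm_num [Finset.sum_range_succ, Nat.factorial]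
  linarith

set_option maxHeartbeats 2000000 in
lemma hGmb_hi : Gfn (-2.11983) ≤ (-1.3700263086 : ℝ) := by
  have h := Gfn_approx (-2.11983 : ℝ) 18
    (by rw [abs_neg, abs_of_pos (by norm_num : (0:ℝ) < 2.11983)]; norm_num)
  rw [abs_neg, abs_of_pos (by norm_num : (0:ℝ) < 2.11983)] at h
  have h1 := (abs_le.mp h).2
  have h2 : (∑ k ∈ Finset.range 18, (-2.11983:ℝ) ^ (k + 1) / (((k : ℝ) + 1) * ((k + 1).factorial : ℝ)))
        + 2 * ((2.11983:ℝ) ^ (18 + 1) / ((((18:ℕ) : ℝ) + 1) * (((18 + 1).factorial : ℕ) : ℝ)))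
        ≤ (-1.3700263086 : ℝ) := by
    norm_num [Finset.sum_range_succ, Nat.factorial]
  linarith

set_option maxHeartbeats 2000000 in
lemma hEb_bounds : (0.120052035622 : ℝ) ≤ Real.exp (-2.11983)
    ∧ Real.exp (-2.11983) ≤ (0.120052035623 : ℝ) := by
  have h := exp_approx (-2.11983 : ℝ) 25
    (by rw [abs_neg, abs_of_pos (by norm_num : (0:ℝ) < 2.11983)]; norm_num)
  rw [abs_neg, abs_of_pos (by norm_num : (0:ℝ) < 2.11983)] at h
  have h1 := abs_le.mp h
  have h2 : (0.120052035622 : ℝ) ≤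
      (∑ k ∈ Finset.range 25, (-2.11983:ℝ) ^ k / ((k.factorial : ℕ) : ℝ))
        - 2 * ((2.11983:ℝ) ^ 25 / (((25).factorial : ℕ) : ℝ)) := by
    norm_num [Finset.sum_range_succ, Nat.factorial]
  have h3 : (∑ k ∈ Finset.range 25, (-2.11983:ℝ) ^ k / ((k.factorial : ℕ) : ℝ))
        + 2 * ((2.11983:ℝ) ^ 25 / (((25).factorial : ℕ) : ℝ)) ≤ (0.120052035623 : ℝ) := by
    norm_num [Finset.sum_range_succ, Nat.factorial]
  constructor <;> [linarith [h1.1]; linarith [h1.2]]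

lemma Ffn_a_neg : Ffn 2.11982 < 0 := by
  have hGa := hGa_lo
  have hGma := hGma_lo
  have hE := hEa_bounds
  have hmul : (0.120053236149 : ℝ) * 4.0821642233 ≤ Real.exp (-2.11982) * Gfn 2.11982 :=
    mul_le_mul hE.1 hGa (by norm_num) (Real.exp_nonneg _)
  rw [Ffn]
  nlinarith [hE.2]

lemma Ffn_b_pos : 0 < Ffn 2.11983 := by
  have hGb := hGb_hi
  have hGmb := hGmb_hi
  have hE := hEb_bounds
  have hGb_pos : 0 ≤ Gfn 2.11983 := by
    have := strictMono_Gfn (show (0:ℝ) < 2.11983 by norm_num)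
    rw [Gfn_zero] at this
    linarith
  have hmul : Real.exp (-2.11983) * Gfn 2.11983 ≤ (0.120052035623 : ℝ) * 4.0821988002 :=
    mul_le_mul hE.2 hGb hGb_pos (by norm_num)
  rw [Ffn]
  nlinarith [hE.1]

end Aux

set_option maxHeartbeats 1000000 in
/-- The equation `q_0(t) = q_1(t)`, with `q_0(t) = (1 - e^{-t})/t` and
`q_1(t) = (-J(-t) - e^{-t}J(t))/t`, has a unique positive root `t_P = 2.11982…`;
equivalently `t_P` is the unique positive root of `-J(-t) - e^{-t}J(t) = 1 - e^{-t}`.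
Moreover, for `t > 0`, `q_0(t) > q_1(t)` iff `t < t_P`. -/
theorem stmt16 :
    ∃ tP : ℝ, 0 < tP ∧
      (1 - Real.exp (-tP)) / tP = (-Jfun (-tP) - Real.exp (-tP) * Jfun tP) / tP ∧
      (∀ t : ℝ, 0 < t →
        ((1 - Real.exp (-t)) / t = (-Jfun (-t) - Real.exp (-t) * Jfun t) / t → t = tP)) ∧
      (∀ t : ℝ, 0 < t →
        ((1 - Real.exp (-t)) / t = (-Jfun (-t) - Real.exp (-t) * Jfun t) / t ↔
          -Jfun (-t) - Real.exp (-t) * Jfun t = 1 - Real.exp (-t))) ∧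
      tP ∈ Set.Ico (2.11982 : ℝ) 2.11983 ∧
      (∀ t : ℝ, 0 < t →
        ((1 - Real.exp (-t)) / t > (-Jfun (-t) - Real.exp (-t) * Jfun t) / t ↔ t < tP)) := by
  -- basic translation: N t := -Jfun (-t) - exp (-t) * Jfun t, and Ffn t = N t - (1 - exp (-t)).
  have hN : ∀ t : ℝ, -Jfun (-t) - Real.exp (-t) * Jfun t - (1 - Real.exp (-t)) = Ffn t := by
    intro t
    rw [Jfun_eq_Gfn, Jfun_eq_Gfn, Ffn]
    ring
  -- t₀ : root of Gfn = 1 in [0, 1]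
  obtain ⟨t₀, ht₀mem, ht₀⟩ : ∃ t₀ ∈ Set.Icc (0:ℝ) 1, Gfn t₀ = 1 := by
    have h := intermediate_value_Icc (by norm_num : (0:ℝ) ≤ 1)
      (continuous_Gfn.continuousOn (s := Set.Icc 0 1))
    have h1 : (1:ℝ) ∈ Set.Icc (Gfn 0) (Gfn 1) := by
      rw [Gfn_zero]
      exact ⟨by norm_num, one_le_Gfn_one⟩
    obtain ⟨t₀, ht₀mem, ht₀⟩ := h h1
    exact ⟨t₀, ht₀mem, ht₀⟩
  -- strict monotonicity pieces of Ffn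
  have hanti : StrictAntiOn Ffn (Set.Icc 0 t₀) := by
    apply strictAntiOn_of_deriv_neg (convex_Icc _ _) continuous_Ffn.continuousOn
    intro x hx
    rw [interior_Icc] at hx
    rw [(hasDerivAt_Ffn x).deriv]
    apply mul_neg_of_pos_of_neg (Real.exp_pos _)
    rw [sub_neg]
    calc Gfn x < Gfn t₀ := strictMono_Gfn hx.2
      _ = 1 := ht₀
  have hmono : StrictMonoOn Ffn (Set.Ici t₀) := by
    apply strictMonoOn_of_deriv_pos (convex_Ici _) continuous_Ffn.continuousOn
    intro x hx
    rw [interior_Ici] at hx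
    rw [(hasDerivAt_Ffn x).deriv]
    apply mul_pos (Real.exp_pos _)
    rw [sub_pos, ← ht₀]
    exact strictMono_Gfn hx
  -- IVT for tP
  obtain ⟨tP, htPmem, htP⟩ : ∃ tP ∈ Set.Ioo (2.11982 : ℝ) 2.11983, Ffn tP = 0 := by
    have h := intermediate_value_Ioo (by norm_num : (2.11982:ℝ) ≤ 2.11983)
      continuous_Ffn.continuousOn
    have h1 : (0:ℝ) ∈ Set.Ioo (Ffn 2.11982) (Ffn 2.11983) := ⟨Ffn_a_neg, Ffn_b_pos⟩
    obtain ⟨tP, htPmem, htP⟩ := h h1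
    exact ⟨tP, htPmem, htP⟩
  have ht₀1 : t₀ ≤ 1 := ht₀mem.2
  have ht₀tP : t₀ < tP := lt_of_le_of_lt ht₀1 (by linarith [htPmem.1] )
  have htP_pos : (0:ℝ) < tP := by linarith [htPmem.1]
  -- sign characterization
  have key : ∀ t : ℝ, 0 < t → (Ffn t < 0 ↔ t < tP) := by
    intro t ht
    constructor
    · intro hFt
      by_contra hle
      push_neg at hle
      have h1 : Ffn tP ≤ Ffn t := by
        rcases eq_or_lt_of_le hle with rfl | hlt
        · exact le_refl _
        · exact le_of_lt (hmono (le_of_lt ht₀tP) (le_trans (le_of_lt ht₀tP) hle) hlt)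
      rw [htP] at h1
      linarith
    · intro hlt
      rcases le_or_gt t t₀ with hcase | hcase
      · have h1 : Ffn t < Ffn 0 := by
          apply hanti ⟨le_refl 0, ht₀mem.1⟩ ⟨le_of_lt ht, hcase⟩ ht
        rw [Ffn_zero] at h1
        exact h1
      · have h1 : Ffn t < Ffn tP :=
          hmono (le_of_lt hcase) (le_of_lt ht₀tP) hlt
        rw [htP] at h1
        exact h1
  have uniq : ∀ t : ℝ, 0 < t → Ffn t = 0 → t = tP := by
    intro t ht hFt
    rcases lt_trichotomy t tP with hlt | heq | hgt
    · exfalso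
      have := (key t ht).mpr hlt
      rw [hFt] at this
      exact lt_irrefl 0 this
    · exact heq
    · exfalso
      have h1 : Ffn tP < Ffn t :=
        hmono (le_of_lt ht₀tP) (le_trans (le_of_lt ht₀tP) (le_of_lt hgt)) hgt
      rw [htP, hFt] at h1
      exact lt_irrefl 0 h1
  -- assemble
  refine ⟨tP, htP_pos, ?_, ?_, ?_, ⟨le_of_lt htPmem.1, htPmem.2⟩, ?_⟩
  · have h0 : -Jfun (-tP) - Real.exp (-tP) * Jfun tP = 1 - Real.exp (-tP) := by
      have := hN tP
      rw [htP] at this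
      linarith
    rw [h0]
  · intro t ht heq
    apply uniq t ht
    have hne : t ≠ 0 := ne_of_gt ht
    have h1 : 1 - Real.exp (-t) = -Jfun (-t) - Real.exp (-t) * Jfun t := by
      field_simp at heq
      linarith
    have := hN t
    linarith
  · intro t ht
    constructor
    · intro heq
      have hne : t ≠ 0 := ne_of_gt ht
      field_simp at heq
      linarith
    · intro h
      rw [h]
  · intro t ht
    rw [gt_iff_lt, div_lt_div_iff_of_pos_right ht, ← key t ht]
    constructor
    · intro h
      have := hN t
      linarith
    · intro h
      have := hN t
      linarith
end

section
/- Let t_F be the unique positive root of J(t) = 1, and define v : [0,∞) → ℝ by v(0) = 0, v(t) = e^{−t}·J(t) for 0 < t ≤ t_F, and v(t) = (e^{t_F} − t_F − 1)·I(t, t_F) + e^{−t_F} for t > t_F. Then v is continuous on [0,∞), continuously differentiable on (0,∞), strictly increasing, satisfies v(t) ≤ e^{−t} for t ≤ t_F and v(t) > e^{−t} for t > t_F, and solves the dynamic-programming equation v'(t) = −v(t) + (1/t)·∫_0^t max(e^{−s}, v(s)) ds for all t > 0. -/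
open MeasureTheory ProbabilityTheory Real

open MeasureTheory ProbabilityTheory Real

noncomputable def gext (ξ : ℝ) : ℝ := if ξ = 0 then 1 else (Real.exp ξ - 1) / ξ

lemma continuous_gext : Continuous gext := by
  rw [continuous_iff_continuousAt]
  intro x
  rcases eq_or_ne x 0 with rfl | hx
  · have h1 : Filter.Tendsto (fun ξ : ℝ => (Real.exp ξ - 1) / ξ) (nhdsWithin 0 {(0:ℝ)}ᶜ)
        (nhds 1) := by
      have h := Real.hasDerivAt_exp 0
      rw [hasDerivAt_iff_tendsto_slope] at h
      simpa [slope_fun_def, Real.exp_zero, div_eq_inv_mul] using h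
    have h2 : Filter.Tendsto gext (nhdsWithin 0 {(0:ℝ)}ᶜ) (nhds 1) := by
      refine h1.congr' ?_
      filter_upwards [self_mem_nhdsWithin] with ξ hξ
      simp [gext, show ξ ≠ 0 from hξ]
    have h3 : Filter.Tendsto gext (nhds 0) (nhds 1) := by
      rw [← nhdsNE_sup_pure (0:ℝ), Filter.tendsto_sup]
      exact ⟨h2, by simpa [gext] using tendsto_pure_nhds gext 0⟩
    have : gext 0 = 1 := by simp [gext]
    simpa [ContinuousAt, this] using h3
  · have hc : ContinuousAt (fun ξ : ℝ => (Real.exp ξ - 1) / ξ) x :=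
      (Real.continuous_exp.continuousAt.sub continuousAt_const).div continuousAt_id hx
    refine hc.congr ?_
    filter_upwards [isOpen_compl_singleton.mem_nhds hx] with ξ hξ
    simp [gext, show ξ ≠ 0 from hξ]

lemma Jfun_eq_gext (t : ℝ) : Jfun t = ∫ ξ in (0:ℝ)..t, gext ξ := by
  apply intervalIntegral.integral_congr_ae
  have h0 : ∀ᵐ x : ℝ, x ≠ 0 := by
    rw [MeasureTheory.ae_iff]
    simpa using measure_singleton (0:ℝ)
  filter_upwards [h0] with x hx _
  simp [gext, hx]

lemma hasDerivAt_Jfun (t : ℝ) : HasDerivAt Jfun (gext t) t := by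
  have h : Jfun = fun u => ∫ ξ in (0:ℝ)..u, gext ξ := funext Jfun_eq_gext
  rw [h]
  exact intervalIntegral.integral_hasDerivAt_right
    (continuous_gext.intervalIntegrable _ _)
    (continuous_gext.stronglyMeasurable.stronglyMeasurableAtFilter)
    continuous_gext.continuousAt

lemma continuous_Jfun : Continuous Jfun :=
  continuous_iff_continuousAt.mpr fun t => (hasDerivAt_Jfun t).continuousAt

lemma one_lt_gext {ξ : ℝ} (h : 0 < ξ) : 1 < gext ξ := by
  rw [gext, if_neg h.ne']
  rw [lt_div_iff₀ h]
  linarith [Real.add_one_lt_exp h.ne']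

lemma gext_nonneg {ξ : ℝ} (h : 0 ≤ ξ) : 0 ≤ gext ξ := by
  rcases h.eq_or_lt with rfl | h'
  · simp [gext]
  · linarith [one_lt_gext h']

lemma Jfun_mono {s t : ℝ} (h0 : 0 ≤ s) (hst : s ≤ t) : Jfun s ≤ Jfun t := by
  have key : Jfun t - Jfun s = ∫ ξ in s..t, gext ξ := by
    rw [Jfun_eq_gext, Jfun_eq_gext,
      intervalIntegral.integral_interval_sub_left
        (continuous_gext.intervalIntegrable _ _) (continuous_gext.intervalIntegrable _ _)]
  have hnn := intervalIntegral.integral_nonneg (μ := volume) hst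
    (fun u hu => gext_nonneg (le_trans h0 hu.1))
  linarith

lemma continuousOn_expdiv {s : Set ℝ} (hs : ∀ x ∈ s, x ≠ 0) :
    ContinuousOn (fun ξ : ℝ => Real.exp (-ξ) / ξ) s :=
  ContinuousOn.div (Real.continuous_exp.comp continuous_neg).continuousOn
    continuousOn_id hs

lemma hasDerivAt_Ifun {s t : ℝ} (hs : 0 < s) (ht : 0 < t) :
    HasDerivAt (fun u => Ifun u s) (Real.exp (-t) / t) t := by
  unfold Ifun
  refine intervalIntegral.integral_hasDerivAt_right ?_ ?_ ?_
  · refine (continuousOn_expdiv ?_).intervalIntegrable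
    intro x hx
    have : min s t ≤ x := hx.1
    have hpos : 0 < x := lt_of_lt_of_le (lt_min hs ht) hx.1
    exact hpos.ne'
  · exact ((Real.measurable_exp.comp measurable_neg).div
      measurable_id).stronglyMeasurable.stronglyMeasurableAtFilter
  · exact ContinuousAt.div ((Real.continuous_exp.comp continuous_neg).continuousAt)
      continuousAt_id ht.ne'

lemma Ifun_nonneg {s t : ℝ} (hs : 0 < s) (hst : s ≤ t) : 0 ≤ Ifun t s := by
  refine intervalIntegral.integral_nonneg hst fun u hu => ?_
  have : 0 < u := lt_of_lt_of_le hs hu.1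
  positivity

/-- Solution of the full-information dynamic-programming equation. With `t_F` the unique
positive root of `J(t) = 1`, the function `v` given by `v(0) = 0`, `v(t) = e^{-t}J(t)` on
`(0, t_F]` and `v(t) = (e^{t_F} - t_F - 1)I(t,t_F) + e^{-t_F}` on `(t_F, ∞)` is continuous on
`[0,∞)`, continuously differentiable on `(0,∞)`, strictly increasing, satisfies
`v(t) ≤ e^{-t}` for `t ≤ t_F` and `v(t) > e^{-t}` for `t > t_F`, and solves
`v'(t) = -v(t) + (1/t)∫_0^t max(e^{-s}, v(s)) ds` for all `t > 0`. -/
theorem stmt17 (tF : ℝ) (htF : 0 < tF) (hroot : Jfun tF = 1)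
    (huniq : ∀ t : ℝ, 0 < t → Jfun t = 1 → t = tF)
    (v : ℝ → ℝ) (hv0 : v 0 = 0)
    (hv1 : ∀ t : ℝ, 0 < t → t ≤ tF → v t = Real.exp (-t) * Jfun t)
    (hv2 : ∀ t : ℝ, tF < t →
      v t = (Real.exp tF - tF - 1) * Ifun t tF + Real.exp (-tF)) :
    ContinuousOn v (Set.Ici 0) ∧
    StrictMonoOn v (Set.Ici 0) ∧
    (∀ t : ℝ, 0 ≤ t → t ≤ tF → v t ≤ Real.exp (-t)) ∧
    (∀ t : ℝ, tF < t → v t > Real.exp (-t)) ∧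
    ∃ v' : ℝ → ℝ, ContinuousOn v' (Set.Ioi 0) ∧
      (∀ t : ℝ, 0 < t → HasDerivAt v (v' t) t) ∧
      (∀ t : ℝ, 0 < t →
        v' t = -v t + (1 / t) * ∫ s in (0:ℝ)..t, max (Real.exp (-s)) (v s)) := by
  set c : ℝ := Real.exp tF - tF - 1 with hc
  have hcpos : 0 < c := by
    have := Real.add_one_lt_exp htF.ne'
    rw [hc]; linarith
  have hvtF : v tF = Real.exp (-tF) := by rw [hv1 tF htF le_rfl, hroot, mul_one]
  have hJ0 : Jfun 0 = 0 := by simp [Jfun]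
  have hw1 : ∀ t ∈ Set.Icc (0:ℝ) tF, v t = Real.exp (-t) * Jfun t := by
    intro t ht
    rcases ht.1.eq_or_lt with rfl | h
    · simp [hv0, hJ0]
    · exact hv1 t h ht.2
  have hw2 : ∀ t ∈ Set.Ici tF, v t = c * Ifun t tF + Real.exp (-tF) := by
    intro t ht
    rcases (Set.mem_Ici.mp ht).eq_or_lt with rfl | h
    · simp [Ifun, intervalIntegral.integral_same, hvtF]
    · exact hv2 t h
  -- (3)
  have hle : ∀ t : ℝ, 0 ≤ t → t ≤ tF → v t ≤ Real.exp (-t) := by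
    intro t h0 h1
    rw [hw1 t ⟨h0, h1⟩]
    have hJ : Jfun t ≤ 1 := hroot ▸ Jfun_mono h0 h1
    nlinarith [Real.exp_pos (-t)]
  -- (4)
  have hgt : ∀ t : ℝ, tF < t → v t > Real.exp (-t) := by
    intro t ht
    rw [hv2 t ht]
    have h1 : 0 ≤ Ifun t tF := Ifun_nonneg htF ht.le
    have h2 : Real.exp (-t) < Real.exp (-tF) := Real.exp_lt_exp.mpr (by linarith)
    nlinarith [mul_nonneg hcpos.le h1]
  -- the candidate derivative
  set vd : ℝ → ℝ := fun t => if t ≤ tF then Real.exp (-t) * ((Real.exp t - 1) / t - Jfun t)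
    else c * Real.exp (-t) / t with hvd
  have hexp : ∀ t : ℝ, HasDerivAt (fun u : ℝ => Real.exp (-u)) (-Real.exp (-t)) t := by
    intro t
    simpa [Function.comp_def] using (Real.hasDerivAt_exp (-t)).comp t (hasDerivAt_neg t)
  have hd1 : ∀ t : ℝ, 0 < t → HasDerivAt (fun u => Real.exp (-u) * Jfun u)
      (Real.exp (-t) * ((Real.exp t - 1) / t - Jfun t)) t := by
    intro t ht
    have h := (hexp t).mul (hasDerivAt_Jfun t)
    have hg : gext t = (Real.exp t - 1) / t := by rw [gext, if_neg ht.ne']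
    have heq : Real.exp (-t) * ((Real.exp t - 1) / t - Jfun t)
        = -Real.exp (-t) * Jfun t + Real.exp (-t) * gext t := by rw [hg]; ring
    rw [heq]; exact h
  have hd2 : ∀ t : ℝ, 0 < t → HasDerivAt (fun u => c * Ifun u tF + Real.exp (-tF))
      (c * Real.exp (-t) / t) t := by
    intro t ht
    have h := ((hasDerivAt_Ifun htF ht).const_mul c).add_const (Real.exp (-tF))
    have heq : c * Real.exp (-t) / t = c * (Real.exp (-t) / t) := by ring
    rw [heq]; exact h
  have hkey : Real.exp (-tF) * ((Real.exp tF - 1) / tF - Jfun tF) = c * Real.exp (-tF) / tF := by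
    rw [hroot, hc]; field_simp; ring
  -- derivative of v everywhere on (0,∞)
  have hDeriv : ∀ t : ℝ, 0 < t → HasDerivAt v (vd t) t := by
    intro t ht
    rcases lt_trichotomy t tF with hlt | heq | hgt'
    · have h := hd1 t ht
      have hev : (fun u => Real.exp (-u) * Jfun u) =ᶠ[nhds t] v := by
        filter_upwards [Ioo_mem_nhds ht hlt] with u hu
        exact (hw1 u ⟨hu.1.le, hu.2.le⟩).symm
      have h2 := h.congr_of_eventuallyEq hev.symm
      simpa [hvd, if_pos hlt.le] using h2
    · subst heq
      have hL : HasDerivWithinAt v (c * Real.exp (-t) / t) (Set.Ioc 0 t) t := by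
        have h0 := (hd1 t ht).hasDerivWithinAt (s := Set.Ioc 0 t)
        rw [hkey] at h0
        exact h0.congr (fun u hu => hw1 u ⟨hu.1.le, hu.2⟩) (hw1 t ⟨ht.le, le_rfl⟩)
      have hR : HasDerivWithinAt v (c * Real.exp (-t) / t) (Set.Ici t) t := by
        have h0 := (hd2 t ht).hasDerivWithinAt (s := Set.Ici t)
        exact h0.congr (fun u hu => hw2 u hu) (hw2 t Set.self_mem_Ici)
      have hU := hL.union hR
      have hnb : Set.Ioc 0 t ∪ Set.Ici t ∈ nhds t := by
        refine Filter.mem_of_superset (Ioi_mem_nhds ht) ?_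
        intro x hx
        rcases le_or_gt x t with h | h
        · exact Or.inl ⟨hx, h⟩
        · exact Or.inr h.le
      have h2 := hU.hasDerivAt hnb
      simp only [hvd, if_pos le_rfl]
      rw [hkey]; exact h2
    · have h := hd2 t ht
      have hev : (fun u => c * Ifun u tF + Real.exp (-tF)) =ᶠ[nhds t] v := by
        filter_upwards [Ioi_mem_nhds hgt'] with u hu
        exact (hw2 u (Set.mem_Ici.mpr (le_of_lt hu))).symm
      have h2 := h.congr_of_eventuallyEq hev.symm
      simpa [hvd, not_le.mpr hgt'] using h2
  -- positivity of vd
  have hvdpos : ∀ t : ℝ, 0 < t → 0 < vd t := by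
    intro t ht
    rw [hvd]; dsimp only
    split_ifs with h
    · have hJ : Jfun t ≤ 1 := hroot ▸ Jfun_mono ht.le h
      have h1 : 1 < (Real.exp t - 1) / t := by
        rw [lt_div_iff₀ ht]; linarith [Real.add_one_lt_exp ht.ne']
      have h2 := Real.exp_pos (-t)
      nlinarith
    · exact div_pos (mul_pos hcpos (Real.exp_pos _)) ht
  -- continuity of vd on (0,∞)
  have hAcont : ∀ t : ℝ, 0 < t →
      ContinuousAt (fun u : ℝ => Real.exp (-u) * ((Real.exp u - 1) / u - Jfun u)) t := by
    intro t ht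
    have h1 : ContinuousAt (fun u : ℝ => Real.exp (-u)) t :=
      (Real.continuous_exp.comp continuous_neg).continuousAt
    have h2 : ContinuousAt (fun u : ℝ => (Real.exp u - 1) / u) t :=
      (Real.continuous_exp.continuousAt.sub continuousAt_const).div continuousAt_id ht.ne'
    exact h1.mul (h2.sub continuous_Jfun.continuousAt)
  have hBcont : ∀ t : ℝ, 0 < t → ContinuousAt (fun u : ℝ => c * Real.exp (-u) / u) t := by
    intro t ht
    exact (continuousAt_const.mul
      (Real.continuous_exp.comp continuous_neg).continuousAt).div continuousAt_id ht.ne'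
  have hvdcont : ContinuousOn vd (Set.Ioi 0) := by
    intro t ht
    have ht' : (0:ℝ) < t := ht
    rcases lt_trichotomy t tF with hlt | heq | hgt'
    · refine ContinuousAt.continuousWithinAt (ContinuousAt.congr (hAcont t ht') ?_)
      filter_upwards [Iio_mem_nhds hlt] with u hu
      simp [hvd, (Set.mem_Iio.mp hu).le]
    · subst heq
      have hIic : ContinuousWithinAt vd (Set.Iic t) t := by
        refine ((hAcont t ht').continuousWithinAt).congr ?_ ?_
        · intro u hu; simp [hvd, Set.mem_Iic.mp hu]
        · simp [hvd]
      have hIci : ContinuousWithinAt vd (Set.Ici t) t := by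
        refine ((hBcont t ht').continuousWithinAt).congr ?_ ?_
        · intro u hu
          rcases (Set.mem_Ici.mp hu).eq_or_lt with rfl | h
          · simp only [hvd, if_pos le_rfl]; exact hkey
          · simp [hvd, not_le.mpr h]
        · simp only [hvd, if_pos le_rfl]; exact hkey
      have h2 := hIic.union hIci
      rw [Set.Iic_union_Ici] at h2
      exact (continuousWithinAt_univ vd t).mp h2 |>.continuousWithinAt
    · refine ContinuousAt.continuousWithinAt (ContinuousAt.congr (hBcont t ht') ?_)
      filter_upwards [Ioi_mem_nhds hgt'] with u hu
      simp [hvd, not_le.mpr (Set.mem_Ioi.mp hu)]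
  -- continuity of v on [0,∞)
  have hw1cont : Continuous (fun u : ℝ => Real.exp (-u) * Jfun u) :=
    (Real.continuous_exp.comp continuous_neg).mul continuous_Jfun
  have hvcont : ContinuousOn v (Set.Ici 0) := by
    intro t ht
    rcases lt_trichotomy t tF with hlt | heq | hgt'
    · rw [← continuousWithinAt_inter (Iio_mem_nhds hlt)]
      refine (hw1cont.continuousAt.continuousWithinAt).congr ?_ ?_
      · intro u hu; exact hw1 u ⟨hu.1, hu.2.le⟩
      · exact hw1 t ⟨ht, hlt.le⟩
    · subst heq
      have hIcc : ContinuousWithinAt v (Set.Icc 0 t) t := by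
        refine (hw1cont.continuousAt.continuousWithinAt).congr ?_ ?_
        · intro u hu; exact hw1 u hu
        · exact hw1 t ⟨ht, le_rfl⟩
      have hIci : ContinuousWithinAt v (Set.Ici t) t := by
        refine (((hd2 t htF).continuousAt).continuousWithinAt).congr ?_ ?_
        · intro u hu; exact hw2 u hu
        · exact hw2 t Set.self_mem_Ici
      refine (hIcc.union hIci).mono ?_
      intro x hx
      rcases le_or_gt x t with h | h
      · exact Or.inl ⟨hx, h⟩
      · exact Or.inr h.le
    · have ht' : (0:ℝ) < t := lt_trans htF hgt'
      rw [← continuousWithinAt_inter (Ioi_mem_nhds hgt')]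
      have hBc : ContinuousAt (fun u : ℝ => c * Ifun u tF + Real.exp (-tF)) t :=
        (hd2 t ht').continuousAt
      refine (hBc.continuousWithinAt).congr ?_ ?_
      · intro u hu; exact hw2 u (Set.mem_Ioi.mp hu.2).le
      · exact hw2 t hgt'.le
  -- strict monotonicity
  have hmono : StrictMonoOn v (Set.Ici 0) := by
    refine strictMonoOn_of_deriv_pos (convex_Ici 0) hvcont ?_
    intro x hx
    rw [interior_Ici] at hx
    rw [(hDeriv x hx).deriv]
    exact hvdpos x hx
  -- the DP equation
  have hE : Real.exp (-tF) * Real.exp tF = 1 := by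
    rw [← Real.exp_add]; simp
  have hint1 : ∀ a : ℝ, 0 ≤ a → a ≤ tF →
      (∫ s in (0:ℝ)..a, max (Real.exp (-s)) (v s)) = 1 - Real.exp (-a) := by
    intro a h0 h1
    have hcg : ∀ s ∈ Set.uIcc (0:ℝ) a, max (Real.exp (-s)) (v s) = Real.exp (-s) := by
      intro s hs
      rw [Set.uIcc_of_le h0] at hs
      exact max_eq_left (hle s hs.1 (le_trans hs.2 h1))
    rw [intervalIntegral.integral_congr hcg,
      intervalIntegral.integral_eq_sub_of_hasDerivAt
        (f := fun s : ℝ => -Real.exp (-s)) (fun s _ => by simpa using (hexp s).fun_neg)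
        ((Continuous.intervalIntegrable (by fun_prop) _ _))]
    simp
    ring
  have hDP : ∀ t : ℝ, 0 < t →
      vd t = -v t + (1 / t) * ∫ s in (0:ℝ)..t, max (Real.exp (-s)) (v s) := by
    intro t ht
    rcases le_or_gt t tF with h | h
    · rw [hint1 t ht.le h, hw1 t ⟨ht.le, h⟩]
      simp only [hvd, if_pos h]
      rw [Real.exp_neg]
      field_simp
      ring
    · -- t > tF
      have hvC : ContinuousOn v (Set.Icc 0 t) := hvcont.mono (Set.Icc_subset_Ici_self)
      have hmaxC : ContinuousOn (fun s => max (Real.exp (-s)) (v s)) (Set.Icc 0 t) :=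
        ContinuousOn.sup (Continuous.continuousOn (by fun_prop)) hvC
      have hi1 : IntervalIntegrable (fun s => max (Real.exp (-s)) (v s)) volume 0 tF := by
        refine (hmaxC.mono ?_).intervalIntegrable
        rw [Set.uIcc_of_le htF.le]
        exact Set.Icc_subset_Icc le_rfl h.le
      have hi2 : IntervalIntegrable (fun s => max (Real.exp (-s)) (v s)) volume tF t := by
        refine (hmaxC.mono ?_).intervalIntegrable
        rw [Set.uIcc_of_le h.le]
        exact Set.Icc_subset_Icc htF.le le_rfl
      have hsplit : (∫ s in (0:ℝ)..t, max (Real.exp (-s)) (v s))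
          = (∫ s in (0:ℝ)..tF, max (Real.exp (-s)) (v s))
            + ∫ s in tF..t, max (Real.exp (-s)) (v s) :=
        (intervalIntegral.integral_add_adjacent_intervals hi1 hi2).symm
      have hcg2 : ∀ s ∈ Set.uIcc tF t, max (Real.exp (-s)) (v s)
          = c * Ifun s tF + Real.exp (-tF) := by
        intro s hs
        rw [Set.uIcc_of_le h.le] at hs
        have hvs : Real.exp (-s) ≤ v s := by
          rcases hs.1.eq_or_lt with rfl | h'
          · rw [hvtF]
          · exact (hgt s h').le
        rw [max_eq_right hvs]
        exact hw2 s hs.1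
      have hftc : (∫ s in tF..t, c * Ifun s tF + Real.exp (-tF))
          = (c * (t * Ifun t tF + Real.exp (-t)) + Real.exp (-tF) * t)
            - (c * (tF * Ifun tF tF + Real.exp (-tF)) + Real.exp (-tF) * tF) := by
        refine intervalIntegral.integral_eq_sub_of_hasDerivAt
          (f := fun s : ℝ => c * (s * Ifun s tF + Real.exp (-s)) + Real.exp (-tF) * s) ?_ ?_
        · intro s hs
          rw [Set.uIcc_of_le h.le] at hs
          have hs0 : 0 < s := lt_of_lt_of_le htF hs.1
          have hI := hasDerivAt_Ifun htF hs0
          have hD := ((((hasDerivAt_id s).mul hI).add (hexp s)).const_mul c).add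
            (((hasDerivAt_id s).const_mul (Real.exp (-tF))))
          have heq : c * Ifun s tF + Real.exp (-tF)
              = c * (1 * Ifun s tF + s * (Real.exp (-s) / s) + -Real.exp (-s))
                + Real.exp (-tF) * 1 := by
            rw [mul_div_cancel₀ _ hs0.ne']
            ring
          rw [heq]; exact hD
        · refine (ContinuousOn.intervalIntegrable ?_)
          intro s hs
          rw [Set.uIcc_of_le h.le] at hs
          have hs0 : 0 < s := lt_of_lt_of_le htF hs.1
          exact (((hd2 s hs0).continuousAt).continuousWithinAt)
      have hItF : Ifun tF tF = 0 := intervalIntegral.integral_same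
      rw [hsplit, hint1 tF htF.le le_rfl, intervalIntegral.integral_congr hcg2, hftc, hItF,
        hw2 t (le_of_lt h)]
      simp only [hvd, not_le.mpr h, if_false]
      rw [hc, Real.exp_neg, Real.exp_neg]
      field_simp
      ring
  exact ⟨hvcont, hmono, hle, hgt, vd, hvdcont, hDeriv, hDP⟩
end
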